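/- Let M ≥ 1, let ζ ∈ ℂ be a primitive M-th root of unity, and let f ∈ ℂ[X] be monic with f(0) ≠ 0. Then f(X) divides f(X^k) in ℂ[X] for every positive integer k with k ≡ 1 (mod M), if and only if there exist a finite set S of pairs (m, j) of integers with m ≥ 1 and 0 ≤ j ≤ M − 1, together with natural numbers h_{m,j} for (m, j) ∈ S, such that f is associated in ℂ[X] to lcm_{(m,j) ∈ S} (ζ^j·X^m − 1)^{h_{m,j}}. -/

import Mathlib

open Polynomial

private lemma aux_comp_dvd {p q r : Polynomial ℂ} (h : p ∣ q) : p.comp r ∣ q.comp r := by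
  obtain ⟨c, rfl⟩ := h
  rw [mul_comp]
  exact dvd_mul_right _ _

private lemma aux_cyc_dvd (M m t : ℕ) (c : ℂ) (hc : c ^ M = 1) :
    (C c * X ^ m - 1 : Polynomial ℂ) ∣ C c * X ^ (m * (1 + M * t)) - 1 := by
  have h1 : (C c * X ^ m - 1 : Polynomial ℂ) ∣ (X : Polynomial ℂ) ^ (m * M) - 1 := by
    have h := sub_dvd_pow_sub_pow (C c * X ^ m : Polynomial ℂ) 1 M
    simpa [mul_pow, ← C_pow, hc, ← pow_mul] using h
  have h2 : ((X : Polynomial ℂ) ^ (m * M) - 1) ∣ (X : Polynomial ℂ) ^ (m * M * t) - 1 := by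
    have h := sub_dvd_pow_sub_pow ((X : Polynomial ℂ) ^ (m * M)) 1 t
    simpa [← pow_mul] using h
  have h3 : (C c * X ^ (m * (1 + M * t)) - 1 : Polynomial ℂ)
      = (C c * X ^ m - 1) * X ^ (m * M * t) + ((X : Polynomial ℂ) ^ (m * M * t) - 1) := by
    rw [Nat.mul_add, Nat.mul_one, pow_add]
    ring
  rw [h3]
  exact dvd_add (dvd_mul_right _ _) (h1.trans h2)

private lemma aux_rm_le_one {k : ℕ} (hk : 0 < k) {a : ℂ} (ha : a ≠ 0) (x : ℂ) :
    rootMultiplicity x ((X : Polynomial ℂ) ^ k - C a) ≤ 1 := by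
  classical
  have hsep : ((X : Polynomial ℂ) ^ k - C a).Separable :=
    separable_X_pow_sub_C a (Nat.cast_ne_zero.2 hk.ne') ha
  rw [← count_roots]
  exact Multiset.nodup_iff_count_le_one.mp (nodup_roots hsep) x

private lemma aux_rm_pow (p : Polynomial ℂ) (n : ℕ) (x : ℂ) :
    rootMultiplicity x (p ^ n) = n * rootMultiplicity x p := by
  classical
  rw [← count_roots, roots_pow, Multiset.count_nsmul, count_roots]

private lemma aux_rm_mono {p q : Polynomial ℂ} (hq : q ≠ 0) (h : p ∣ q) (x : ℂ) :
    rootMultiplicity x p ≤ rootMultiplicity x q :=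
  (le_rootMultiplicity_iff hq).2 ((pow_rootMultiplicity_dvd p x).trans h)

theorem stmt10 (M : ℕ) (hM : 1 ≤ M) (ζ : ℂ)
    (hζ : ζ ^ M = 1) (hζprim : ∀ t : ℕ, 1 ≤ t → t < M → ζ ^ t ≠ 1)
    (f : Polynomial ℂ) (hmonic : f.Monic) (hf0 : f.eval 0 ≠ 0) :
    (∀ k : ℕ, 0 < k → k % M = 1 % M → f ∣ f.comp (Polynomial.X ^ k)) ↔
    ∃ S : Finset (ℕ × ℕ), (∀ p ∈ S, 1 ≤ p.1 ∧ p.2 ≤ M - 1) ∧ ∃ h : ℕ × ℕ → ℕ,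
      Associated f (S.lcm fun p =>
        (Polynomial.C (ζ ^ p.2) * Polynomial.X ^ p.1 - 1) ^ (h p)) := by
  classical
  have hf0' : f ≠ 0 := hmonic.ne_zero
  have hroot0 : ∀ a : ℂ, f.IsRoot a → a ≠ 0 := fun a ha h0 => hf0 (by rw [h0] at ha; exact ha)
  have hζ0 : ζ ≠ 0 := by
    intro hcon
    rw [hcon, zero_pow (Nat.one_le_iff_ne_zero.mp hM)] at hζ
    exact zero_ne_one hζ
  have hprim : IsPrimitiveRoot ζ M := by
    refine ⟨hζ, fun l hl => ?_⟩
    have hmod : ζ ^ (l % M) = 1 := by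
      conv at hl => rw [← Nat.div_add_mod l M]
      rwa [pow_add, pow_mul, hζ, one_pow, one_mul] at hl
    by_contra hcon
    have h1 : 1 ≤ l % M := Nat.one_le_iff_ne_zero.2 fun h => hcon (Nat.dvd_of_mod_eq_zero h)
    exact hζprim _ h1 (Nat.mod_lt _ hM) hmod
  haveI : NeZero M := ⟨Nat.one_le_iff_ne_zero.mp hM⟩
  constructor
  · -- forward direction
    intro hdvd
    have stepA : ∀ k, 0 < k → k % M = 1 % M → ∀ a : ℂ, f.IsRoot a →
        f.IsRoot (a ^ k) ∧ rootMultiplicity a f ≤ rootMultiplicity (a ^ k) f := by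
      intro k hk hkM a ha
      obtain ⟨w, hw⟩ := hdvd k hk hkM
      have ha0 := hroot0 a ha
      have hceval : (f.comp (X ^ k)).eval a = f.eval (a ^ k) := by simp [eval_comp]
      have hroot : f.IsRoot (a ^ k) := by
        rw [IsRoot, ← hceval, hw, eval_mul, ha.eq_zero, zero_mul]
      refine ⟨hroot, ?_⟩
      set b := a ^ k with hb
      have hb0 : b ≠ 0 := pow_ne_zero _ ha0
      set e' := rootMultiplicity b f with he'
      have hfeq : (X - C b) ^ e' * (f /ₘ (X - C b) ^ e') = f :=
        pow_mul_divByMonic_rootMultiplicity_eq f b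
      set q := f /ₘ (X - C b) ^ e' with hqdef
      have hqb : q.eval b ≠ 0 := eval_divByMonic_pow_rootMultiplicity_ne_zero b hf0'
      have hcompeq : f.comp (X ^ k) = ((X : Polynomial ℂ) ^ k - C b) ^ e' * q.comp (X ^ k) := by
        conv_lhs => rw [← hfeq]
        simp [sub_comp, pow_comp, mul_comp]
      have hX : ((X : Polynomial ℂ) ^ k - C b) ≠ 0 := by
        intro hcon
        have h0 := congrArg (eval 0) hcon
        rw [eval_sub, eval_pow, eval_X, eval_C, eval_zero, zero_pow hk.ne', zero_sub,
          neg_eq_zero] at h0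
        exact hb0 h0
      have hqc : (q.comp (X ^ k)).eval a = q.eval b := by simp [eval_comp, hb]
      have hne : f.comp (X ^ k) ≠ 0 := by
        rw [hcompeq]
        exact mul_ne_zero (pow_ne_zero _ hX)
          (fun hc => hqb (by rw [← hqc, hc, eval_zero]))
      have h1 : rootMultiplicity a (f.comp (X ^ k)) = e' := by
        rw [hcompeq] at hne ⊢
        rw [rootMultiplicity_mul hne]
        have h2 : rootMultiplicity a (q.comp (X ^ k)) = 0 :=
          rootMultiplicity_eq_zero (by rw [IsRoot, hqc]; exact hqb)
        have h3 : rootMultiplicity a ((X : Polynomial ℂ) ^ k - C b) = 1 := by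
          refine le_antisymm (aux_rm_le_one hk hb0 a) ?_
          exact (rootMultiplicity_pos hX).2 (by simp [IsRoot, hb])
        rw [aux_rm_pow, h2, h3, mul_one, add_zero]
      calc rootMultiplicity a f ≤ rootMultiplicity a (f.comp (X ^ k)) :=
            aux_rm_mono hne ⟨w, hw⟩ a
        _ = e' := h1
    have stepB : ∀ a : ℂ, f.IsRoot a → IsOfFinOrder a := by
      intro a ha
      have ha0 := hroot0 a ha
      have key : ∀ t₁ t₂ : ℕ, t₁ < t₂ → a ^ (1 + M * t₁) = a ^ (1 + M * t₂) →
          IsOfFinOrder a := by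
        intro t₁ t₂ hlt heq
        refine isOfFinOrder_iff_pow_eq_one.2 ⟨M * (t₂ - t₁), Nat.mul_pos hM (by omega), ?_⟩
        have hmm : a ^ (1 + M * t₁) * a ^ (M * (t₂ - t₁)) = a ^ (1 + M * t₁) * 1 := by
          rw [mul_one, ← pow_add, heq]
          congr 1
          have : M * t₂ = M * t₁ + M * (t₂ - t₁) := by
            rw [← Nat.mul_add]
            congr 1
            omega
          omega
        exact mul_left_cancel₀ (pow_ne_zero _ ha0) hmm
      have hmap : ∀ t : ℕ, a ^ (1 + M * t) ∈ f.roots.toFinset := by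
        intro t
        have hk : (0:ℕ) < 1 + M * t := by omega
        have hkM : (1 + M * t) % M = 1 % M := by simp [Nat.add_mul_mod_self_left]
        have hr := (stepA _ hk hkM a ha).1
        rw [Multiset.mem_toFinset, mem_roots hf0']
        exact hr
      obtain ⟨t₁, _, t₂, _, hnet, heqt⟩ :=
        Finset.exists_ne_map_eq_of_card_lt_of_maps_to
          (s := Finset.range (f.roots.toFinset.card + 1))
          (t := f.roots.toFinset) (by simp) (fun t _ => hmap t)
      rcases Nat.lt_or_ge t₁ t₂ with hlt | hge
      · exact key t₁ t₂ hlt heqt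
      · exact key t₂ t₁ (by omega) heqt.symm
    set m : ℂ → ℕ := fun a => orderOf (a ^ M) with hm
    have hmpos : ∀ a : ℂ, f.IsRoot a → 0 < m a := fun a ha => ((stepB a ha).pow).orderOf_pos
    have hpowM : ∀ a : ℂ, (a ^ m a) ^ M = 1 := by
      intro a
      rw [← pow_mul, mul_comm, pow_mul]
      exact pow_orderOf_eq_one _
    have hjex : ∀ a : ℂ, f.IsRoot a → ∃ j, j < M ∧ ζ ^ j * a ^ m a = 1 := by
      intro a ha
      have ha0 := hroot0 a ha
      have hx : ((a ^ m a)⁻¹) ^ M = 1 := by rw [inv_pow, hpowM, inv_one]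
      obtain ⟨jj, hj, hje⟩ := hprim.eq_pow_of_pow_eq_one hx
      refine ⟨jj, hj, ?_⟩
      rw [hje, inv_mul_cancel₀ (pow_ne_zero _ ha0)]
    set j : ℂ → ℕ := fun a =>
      if h : ∃ j, j < M ∧ ζ ^ j * a ^ m a = 1 then h.choose else 0 with hjdef
    have hjspec : ∀ a : ℂ, f.IsRoot a → j a < M ∧ ζ ^ (j a) * a ^ m a = 1 := by
      intro a ha
      have hx := hjex a ha
      simp only [hjdef, dif_pos hx]
      exact hx.choose_spec
    set F : ℂ → ℕ × ℕ := fun a => (m a, j a) with hF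
    set e : ℂ → ℕ := fun a => rootMultiplicity a f with he
    set Rs := f.roots.toFinset with hRs
    set S := Rs.image F with hS
    set hfun := fun p : ℕ × ℕ => (Rs.filter fun b => F b = p).sup e with hhfun
    have hmemRs : ∀ a, a ∈ Rs ↔ f.IsRoot a := by
      intro a
      rw [hRs, Multiset.mem_toFinset, mem_roots hf0']
    have KF1 : ∀ a, f.IsRoot a → ∀ b : ℂ, b ^ m a = a ^ m a →
        ∃ k, 0 < k ∧ k % M = 1 % M ∧ a ^ k = b := by
      intro a ha b hb
      have ha0 := hroot0 a ha
      have hma := hmpos a ha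
      haveI : NeZero (m a) := ⟨hma.ne'⟩
      have hprim' : IsPrimitiveRoot (a ^ M) (m a) := IsPrimitiveRoot.orderOf _
      have hω : (b / a) ^ m a = 1 := by rw [div_pow, hb, div_self (pow_ne_zero _ ha0)]
      obtain ⟨i, _, hie⟩ := hprim'.eq_pow_of_pow_eq_one hω
      refine ⟨1 + M * i, by omega, by simp [Nat.add_mul_mod_self_left], ?_⟩
      rw [pow_add, pow_one, pow_mul, hie, mul_comm, div_mul_cancel₀ _ ha0]
    have KF2 : ∀ a, f.IsRoot a → ∀ b : ℂ, b ^ m a = a ^ m a →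
        f.IsRoot b ∧ e a ≤ e b := by
      intro a ha b hb
      obtain ⟨k, hk, hkM, hab⟩ := KF1 a ha b hb
      have hres := stepA k hk hkM a ha
      rw [hab] at hres
      exact hres
    have KF3 : ∀ a, a ∈ Rs → hfun (F a) = e a := by
      intro a haRs
      have ha := (hmemRs a).1 haRs
      have hall : ∀ b ∈ Rs.filter (fun b => F b = F a), e b = e a := by
        intro b hbmem
        rw [Finset.mem_filter] at hbmem
        obtain ⟨hbRs, hFb⟩ := hbmem
        have hb := (hmemRs b).1 hbRs
        have hmeq : m b = m a := congrArg Prod.fst hFb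
        have hjeq : j b = j a := congrArg Prod.snd hFb
        have hba : b ^ m a = a ^ m a := by
          have h1 := (hjspec a ha).2
          have h2 := (hjspec b hb).2
          rw [hjeq, hmeq] at h2
          have hz : (ζ : ℂ) ^ (j a) ≠ 0 := pow_ne_zero _ hζ0
          exact mul_left_cancel₀ hz (by rw [h1, h2])
        have hab : a ^ m b = b ^ m b := by rw [hmeq]; exact hba.symm
        exact le_antisymm ((KF2 b hb a hab).2) ((KF2 a ha b hba).2)
      refine le_antisymm (Finset.sup_le fun b hb => le_of_eq (hall b hb)) ?_
      exact Finset.le_sup (Finset.mem_filter.2 ⟨haRs, rfl⟩)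
    have hfac : ∀ a, f.IsRoot a →
        (C (ζ ^ j a) * X ^ m a - 1 : Polynomial ℂ)
          = C (ζ ^ j a) * (X ^ m a - C (a ^ m a)) := by
      intro a ha
      have hje := (hjspec a ha).2
      rw [mul_sub, ← C_mul, hje, map_one]
    have hPne : ∀ a, f.IsRoot a → (C (ζ ^ j a) * X ^ m a - 1 : Polynomial ℂ) ≠ 0 := by
      intro a ha hcon
      have h0 := congrArg (eval 0) hcon
      simp [zero_pow (hmpos a ha).ne'] at h0
    have hcount : ∀ a, f.IsRoot a → ∀ b : ℂ,
        ((X ^ m a - C (a ^ m a) : Polynomial ℂ)).roots.count b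
          = if b ^ m a = a ^ m a then 1 else 0 := by
      intro a ha b
      have ha0 := hroot0 a ha
      have hma := hmpos a ha
      have hXne : ((X : Polynomial ℂ) ^ m a - C (a ^ m a)) ≠ 0 := by
        intro hcon
        have h0 := congrArg (eval 0) hcon
        rw [eval_sub, eval_pow, eval_X, eval_C, eval_zero, zero_pow hma.ne', zero_sub,
          neg_eq_zero] at h0
        exact pow_ne_zero _ ha0 h0
      rw [count_roots]
      split_ifs with hcase
      · refine le_antisymm (aux_rm_le_one hma (pow_ne_zero _ ha0) b) ?_
        exact (rootMultiplicity_pos hXne).2 (by simp [IsRoot, sub_eq_zero, hcase])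
      · exact rootMultiplicity_eq_zero (by simp [IsRoot, sub_eq_zero, hcase])
    refine ⟨S, ?_, hfun, ?_⟩
    · intro p hp
      rw [hS, Finset.mem_image] at hp
      obtain ⟨a, haRs, rfl⟩ := hp
      have ha := (hmemRs a).1 haRs
      refine ⟨hmpos a ha, ?_⟩
      have := (hjspec a ha).1
      show j a ≤ M - 1
      omega
    · set L := S.lcm (fun p => (C (ζ ^ p.2) * X ^ p.1 - 1) ^ hfun p) with hL
      have hgne : ∀ p ∈ S, ((C (ζ ^ p.2) * X ^ p.1 - 1 : Polynomial ℂ) ^ hfun p) ≠ 0 := by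
        intro p hp
        rw [hS, Finset.mem_image] at hp
        obtain ⟨a, haRs, rfl⟩ := hp
        exact pow_ne_zero _ (hPne a ((hmemRs a).1 haRs))
      have hLne : L ≠ 0 := by
        rw [hL, Ne, Finset.lcm_eq_zero_iff]
        rintro ⟨p, hp, hp0⟩
        exact hgne p hp hp0
      have hcomproots : ∀ a, a ∈ Rs → ∀ b : ℂ,
          (((C (ζ ^ j a) * X ^ m a - 1 : Polynomial ℂ)) ^ e a).roots.count b
            = if b ^ m a = a ^ m a then e a else 0 := by
        intro a haRs b
        have ha := (hmemRs a).1 haRs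
        rw [roots_pow, Multiset.count_nsmul, hfac a ha,
          roots_C_mul _ (pow_ne_zero _ hζ0), hcount a ha b]
        split_ifs <;> simp
      have hLf : L ∣ f := by
        rw [hL]
        refine Finset.lcm_dvd ?_
        intro p hp
        have hp' := hp
        rw [hS, Finset.mem_image] at hp'
        obtain ⟨a, haRs, rfl⟩ := hp'
        have ha := (hmemRs a).1 haRs
        show (C (ζ ^ j a) * X ^ m a - 1 : Polynomial ℂ) ^ hfun (F a) ∣ f
        rw [KF3 a haRs]
        refine (IsAlgClosed.splits _).dvd_of_roots_le_roots
          (pow_ne_zero _ (hPne a ha)) ?_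
        rw [Multiset.le_iff_count]
        intro b
        rw [hcomproots a haRs b, count_roots]
        split_ifs with hcase
        · exact (KF2 a ha b hcase).2
        · exact Nat.zero_le _
      have hfL : f ∣ L := by
        refine (IsAlgClosed.splits _).dvd_of_roots_le_roots hf0' ?_
        rw [Multiset.le_iff_count]
        intro b
        by_cases hbRs : b ∈ Rs
        · have hb := (hmemRs b).1 hbRs
          have hQdvd : ((C (ζ ^ j b) * X ^ m b - 1 : Polynomial ℂ)) ^ hfun (F b) ∣ L := by
            rw [hL]
            rw [show j b = (F b).2 from rfl, show m b = (F b).1 from rfl]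
            exact Finset.dvd_lcm (f := fun p : ℕ × ℕ => (C (ζ ^ p.2) * X ^ p.1 - 1 : Polynomial ℂ) ^ hfun p)
              (by rw [hS]; exact Finset.mem_image_of_mem F hbRs)
          rw [KF3 b hbRs] at hQdvd
          have hle := roots.le_of_dvd hLne hQdvd
          have hcnt := hcomproots b hbRs b
          rw [if_pos rfl] at hcnt
          calc f.roots.count b = e b := count_roots f
            _ = (((C (ζ ^ j b) * X ^ m b - 1 : Polynomial ℂ)) ^ e b).roots.count b :=
                hcnt.symm
            _ ≤ L.roots.count b := Multiset.le_iff_count.mp hle b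
        · have hz : f.roots.count b = 0 := by
            rw [count_roots]
            exact rootMultiplicity_eq_zero (fun hcon => hbRs ((hmemRs b).2 hcon))
          rw [hz]
          exact Nat.zero_le _
      exact associated_of_dvd_dvd hfL hLf
  · rintro ⟨S, hSprop, h, hassoc⟩ k hk hkM
    obtain ⟨t, ht⟩ : ∃ t, k = 1 + M * t := by
      have hdvd1 : M ∣ k - 1 := (Nat.modEq_iff_dvd' (by omega)).mp hkM.symm
      obtain ⟨t, ht⟩ := hdvd1
      exact ⟨t, by omega⟩
    subst ht
    set L := S.lcm (fun p => (C (ζ ^ p.2) * X ^ p.1 - 1) ^ h p) with hL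
    have hLL : L ∣ L.comp (X ^ (1 + M * t)) := by
      rw [hL]
      refine Finset.lcm_dvd ?_
      intro p hp
      have hdvd1 : (C (ζ ^ p.2) * X ^ p.1 - 1 : Polynomial ℂ)
          ∣ (C (ζ ^ p.2) * X ^ p.1 - 1).comp (X ^ (1 + M * t)) := by
        have hcomp : (C (ζ ^ p.2) * X ^ p.1 - 1 : Polynomial ℂ).comp (X ^ (1 + M * t))
            = C (ζ ^ p.2) * X ^ (p.1 * (1 + M * t)) - 1 := by
          rw [sub_comp, mul_comp, C_comp, one_comp, pow_comp, X_comp, ← pow_mul, Nat.mul_comm]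
        rw [hcomp]
        exact aux_cyc_dvd M p.1 t _ (by rw [← pow_mul, mul_comm, pow_mul, hζ, one_pow])
      have hdvd2 := pow_dvd_pow_of_dvd hdvd1 (h p)
      have hdvd3 : ((C (ζ ^ p.2) * X ^ p.1 - 1 : Polynomial ℂ).comp (X ^ (1 + M * t))) ^ h p
          ∣ (S.lcm (fun p => (C (ζ ^ p.2) * X ^ p.1 - 1) ^ h p)).comp (X ^ (1 + M * t)) := by
        rw [← pow_comp]
        exact aux_comp_dvd (Finset.dvd_lcm hp)
      exact hdvd2.trans hdvd3
    have h1 : f ∣ L := hassoc.dvd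
    have h2 : L.comp (X ^ (1 + M * t)) ∣ f.comp (X ^ (1 + M * t)) :=
      aux_comp_dvd hassoc.symm.dvd
    exact (h1.trans hLL).trans h2
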